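/- Suppose for every schedule σ, every initial covariance φ, and every t, the perturbation bound Σₜ^σ(φ + εIₙ) ⪯ Σₜ^σ(φ) + ε·gₜ^σ(φ) holds with tr(gₜ^σ(φ)) ≤ αηᵗ for some constants α ≥ 0 and η ∈ (0,1), where gₜ^σ(φ) is positive semidefinite. Then if a schedule σ is feasible for some initial covariance φ₁ (i.e., its trajectory from φ₁ is bounded: Σₜ^σ(φ₁) ⪯ βIₙ for all t for some β < ∞), σ is feasible for every initial covariance φ, i.e., the trajectory from any φ is bounded. -/

import Mathlib

open Matrix

open scoped Matrix.Norms.L2Operator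


lemma psd_smul {n : ℕ} {A : Matrix (Fin n) (Fin n) ℝ} (hA : A.PosSemidef) {c : ℝ}
    (hc : 0 ≤ c) : (c • A).PosSemidef := by
  refine ⟨?_, fun x => ?_⟩
  · have h : Aᵀ = A := by simpa using hA.1.eq
    simp [Matrix.IsHermitian, Matrix.conjTranspose_smul, h]
  · have := hA.2 x
    exact (hA.smul hc).2 x

lemma psd_trace_nonneg {n : ℕ} {A : Matrix (Fin n) (Fin n) ℝ} (hA : A.PosSemidef) :
    0 ≤ A.trace := by
  rw [Matrix.trace]
  exact Finset.sum_nonneg fun i _ => by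
    have := hA.diag_nonneg (i := i)
    simpa [Matrix.diag] using this

lemma psd_sub_trace_smul_one {n : ℕ} {A : Matrix (Fin n) (Fin n) ℝ} (hA : A.PosSemidef) :
    (A.trace • (1 : Matrix (Fin n) (Fin n) ℝ) - A).PosSemidef := by
  have hH := hA.1
  set U : Matrix (Fin n) (Fin n) ℝ := (hH.eigenvectorUnitary : Matrix (Fin n) (Fin n) ℝ) with hUdef
  have hU1 : U * star U = 1 := Matrix.mem_unitaryGroup_iff.mp hH.eigenvectorUnitary.2
  have hU2 : star U * U = 1 := Matrix.mem_unitaryGroup_iff'.mp hH.eigenvectorUnitary.2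
  have hspec : A = U * Matrix.diagonal hH.eigenvalues * star U := by
    simpa using hH.spectral_theorem
  have htr : A.trace = ∑ i, hH.eigenvalues i := by
    conv_lhs => rw [hspec]
    rw [Matrix.trace_mul_cycle, hU2, Matrix.one_mul, Matrix.trace_diagonal]
  have hdiag : Matrix.diagonal (fun i => A.trace - hH.eigenvalues i)
      = A.trace • (1 : Matrix (Fin n) (Fin n) ℝ) - Matrix.diagonal hH.eigenvalues := by
    ext i j
    by_cases h : i = j <;> simp [Matrix.diagonal_apply, Matrix.one_apply, h]
  have key : A.trace • (1 : Matrix (Fin n) (Fin n) ℝ) - A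
      = U * Matrix.diagonal (fun i => A.trace - hH.eigenvalues i) * star U := by
    rw [hdiag, Matrix.mul_sub, Matrix.sub_mul, Matrix.mul_smul, Matrix.mul_one, Matrix.smul_mul,
      hU1, ← hspec]
  rw [key]
  have hd : (Matrix.diagonal (fun i => A.trace - hH.eigenvalues i)).PosSemidef := by
    refine Matrix.posSemidef_diagonal_iff.mpr fun i => ?_
    rw [htr, sub_nonneg]
    exact Finset.single_le_sum (fun j _ => hA.eigenvalues_nonneg j) (Finset.mem_univ i)
  exact hd.mul_mul_conjTranspose_same U

/-- The trajectory of the sequential Riccati mapping: `traj ρ σ φ t = Σₜ^σ(φ)`. -/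
def traj {n : ℕ} {M : ℕ} (ρ : Fin M → Matrix (Fin n) (Fin n) ℝ → Matrix (Fin n) (Fin n) ℝ)
    (σ : ℕ → Fin M) (φ : Matrix (Fin n) (Fin n) ℝ) : ℕ → Matrix (Fin n) (Fin n) ℝ
  | 0 => φ
  | t + 1 => ρ (σ t) (traj ρ σ φ t)

/-- If a schedule is feasible for some initial covariance, then it is feasible for
every initial covariance. -/
theorem feasible_of_feasible_some {n M : ℕ}
    (ρ : Fin M → Matrix (Fin n) (Fin n) ℝ → Matrix (Fin n) (Fin n) ℝ)
    -- monotonicity of the composite maps in the Loewner order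
    (h_mono : ∀ (σ : ℕ → Fin M) (φ₁ φ₂ : Matrix (Fin n) (Fin n) ℝ), φ₁.PosSemidef →
      φ₂.PosSemidef → (φ₂ - φ₁).PosSemidef →
      ∀ t : ℕ, (traj ρ σ φ₂ t - traj ρ σ φ₁ t).PosSemidef)
    -- the directional derivative `g` with its perturbation bound
    (g : (ℕ → Fin M) → Matrix (Fin n) (Fin n) ℝ → ℕ → Matrix (Fin n) (Fin n) ℝ)
    (hg_psd : ∀ σ φ t, φ.PosSemidef → (g σ φ t).PosSemidef)
    (h_pert : ∀ (σ : ℕ → Fin M) (φ : Matrix (Fin n) (Fin n) ℝ), φ.PosSemidef →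
      ∀ (ε : ℝ), 0 ≤ ε → ∀ t : ℕ,
      (traj ρ σ φ t + ε • g σ φ t - traj ρ σ (φ + ε • (1 : Matrix (Fin n) (Fin n) ℝ)) t).PosSemidef)
    -- exponential decay of the trace of `g`
    (h_exp : ∀ (σ : ℕ → Fin M) (φ : Matrix (Fin n) (Fin n) ℝ), φ.PosSemidef →
      ∃ α : ℝ, 0 ≤ α ∧ ∃ η ∈ Set.Ioo (0 : ℝ) 1, ∀ t : ℕ, (g σ φ t).trace ≤ α * η ^ t)
    (σ : ℕ → Fin M) (φ₁ : Matrix (Fin n) (Fin n) ℝ) (hφ₁ : φ₁.PosSemidef)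
    -- feasibility of `σ` for `φ₁`
    (hfeas : ∃ β : ℝ, ∀ t : ℕ,
      (β • (1 : Matrix (Fin n) (Fin n) ℝ) - traj ρ σ φ₁ t).PosSemidef) :
    ∀ (φ : Matrix (Fin n) (Fin n) ℝ), φ.PosSemidef →
      ∃ β : ℝ, ∀ t : ℕ,
        (β • (1 : Matrix (Fin n) (Fin n) ℝ) - traj ρ σ φ t).PosSemidef := by
  intro φ hφ
  obtain ⟨β, hβ⟩ := hfeas
  obtain ⟨α, hα, η, hη, hηbd⟩ := h_exp σ φ₁ hφ₁
  set ε : ℝ := φ.trace with hεdef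
  have hε : 0 ≤ ε := psd_trace_nonneg hφ
  have hone : (ε • (1 : Matrix (Fin n) (Fin n) ℝ)).PosSemidef :=
    psd_smul (Matrix.PosSemidef.one) hε
  have hφ₂ : (φ₁ + ε • (1 : Matrix (Fin n) (Fin n) ℝ)).PosSemidef := hφ₁.add hone
  have hsub : (φ₁ + ε • (1 : Matrix (Fin n) (Fin n) ℝ) - φ).PosSemidef := by
    have h1 : (ε • (1 : Matrix (Fin n) (Fin n) ℝ) - φ).PosSemidef := by
      simpa [hεdef] using psd_sub_trace_smul_one hφ
    have := hφ₁.add h1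
    simpa [add_sub_assoc] using this
  refine ⟨β + ε * α, fun t => ?_⟩
  have P1 := hβ t
  have P2 := h_pert σ φ₁ hφ₁ ε hε t
  have P3 := h_mono σ φ (φ₁ + ε • (1 : Matrix (Fin n) (Fin n) ℝ)) hφ hφ₂ hsub t
  have hgt := hg_psd σ φ₁ t hφ₁
  have htr : (g σ φ₁ t).trace ≤ α := by
    refine (hηbd t).trans ?_
    calc α * η ^ t ≤ α * 1 := by
          have : η ^ t ≤ 1 := pow_le_one₀ hη.1.le hη.2.le
          exact mul_le_mul_of_nonneg_left this hα
      _ = α := mul_one α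
  have P4a : ((α - (g σ φ₁ t).trace) • (1 : Matrix (Fin n) (Fin n) ℝ)).PosSemidef :=
    psd_smul Matrix.PosSemidef.one (by linarith)
  have P4b := psd_sub_trace_smul_one hgt
  have P4 : (ε • (α • (1 : Matrix (Fin n) (Fin n) ℝ) - g σ φ₁ t)).PosSemidef := by
    refine psd_smul ?_ hε
    have := P4a.add P4b
    have heq : (α - (g σ φ₁ t).trace) • (1 : Matrix (Fin n) (Fin n) ℝ)
        + ((g σ φ₁ t).trace • (1 : Matrix (Fin n) (Fin n) ℝ) - g σ φ₁ t)
        = α • (1 : Matrix (Fin n) (Fin n) ℝ) - g σ φ₁ t := by module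
    rwa [heq] at this
  have hsum := ((P1.add P2).add P3).add P4
  have heq2 : β • (1 : Matrix (Fin n) (Fin n) ℝ) - traj ρ σ φ₁ t
      + (traj ρ σ φ₁ t + ε • g σ φ₁ t
          - traj ρ σ (φ₁ + ε • (1 : Matrix (Fin n) (Fin n) ℝ)) t)
      + (traj ρ σ (φ₁ + ε • (1 : Matrix (Fin n) (Fin n) ℝ)) t - traj ρ σ φ t)
      + ε • (α • (1 : Matrix (Fin n) (Fin n) ℝ) - g σ φ₁ t)
      = (β + ε * α) • (1 : Matrix (Fin n) (Fin n) ℝ) - traj ρ σ φ t := by module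
  rwa [heq2] at hsum
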